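/- Let n, d ≥ 2 and T = Σ_{k=1}^{n+1} v_k^{⊗d} be a regular simplex tensor. If (v, μ) is an eigenpair of T with v = Σ_{k=1}^n α_k v_k, then for every permutation σ of {1,...,n+1}, the vector Σ_{k=1}^n α_k v_{σ(k)} is also an eigenvector of T with the same eigenvalue μ. -/

import Mathlib

open scoped RealInnerProductSpace BigOperators

noncomputable def simplexVec (n : ℕ) (k : Fin (n + 1)) : EuclideanSpace ℝ (Fin n) :=
  if h : (k : ℕ) < n then
    Real.sqrt (1 + 1 / n) • EuclideanSpace.single ⟨k, h⟩ 1
      - ((Real.sqrt (n + 1) - 1) / (n : ℝ) ^ ((3 : ℝ) / 2)) •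
        (WithLp.toLp 2 (fun _ => (1 : ℝ)) : EuclideanSpace ℝ (Fin n))
  else
    -(1 / Real.sqrt n) • (WithLp.toLp 2 (fun _ => (1 : ℝ)) : EuclideanSpace ℝ (Fin n))

lemma gram (n : ℕ) (hn : 1 ≤ n) (k j : Fin (n+1)) :
    ⟪simplexVec n k, simplexVec n j⟫ = if k = j then 1 else -(1/(n:ℝ)) := by
  have hn0 : (0:ℝ) < n := by exact_mod_cast hn
  set sn := Real.sqrt n with hsn
  set s1 := Real.sqrt (n+1) with hs1
  have hsn0 : 0 < sn := Real.sqrt_pos.2 hn0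
  have hsn2 : sn^2 = n := Real.sq_sqrt hn0.le
  have hs12 : s1^2 = n+1 := Real.sq_sqrt (by positivity)
  have ha : Real.sqrt (1 + 1/n) = s1/sn := by
    rw [show (1:ℝ) + 1/n = (n+1)/n by field_simp, Real.sqrt_div (by positivity) _, hs1, hsn]
  have hp : (n:ℝ)^((3:ℝ)/2) = n * sn := by
    rw [show (3:ℝ)/2 = 1 + 1/2 by norm_num, Real.rpow_add hn0, Real.rpow_one,
      ← Real.sqrt_eq_rpow, hsn]
  set o : EuclideanSpace ℝ (Fin n) := WithLp.toLp 2 (fun _ => (1 : ℝ)) with ho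
  have hoo : ⟪o, o⟫ = n := by simp [PiLp.inner_apply, RCLike.inner_apply, ho, EuclideanSpace.norm_sq_eq]
  have hso : ∀ k0 : Fin n, ⟪EuclideanSpace.single k0 (1:ℝ), o⟫ = 1 := by
    intro k0; simp [EuclideanSpace.inner_single_left, ho]
  have hos : ∀ k0 : Fin n, ⟪o, EuclideanSpace.single k0 (1:ℝ)⟫ = 1 := by
    intro k0; rw [real_inner_comm]; exact hso k0
  have hss : ∀ k0 j0 : Fin n, ⟪EuclideanSpace.single k0 (1:ℝ), EuclideanSpace.single j0 (1:ℝ)⟫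
      = if k0 = j0 then 1 else 0 := by
    intro k0 j0; simp [EuclideanSpace.inner_single_left, EuclideanSpace.single_apply, eq_comm]
  clear_value sn s1
  by_cases hk : (k:ℕ) < n <;> by_cases hj : (j:ℕ) < n
  · rw [simplexVec, dif_pos hk, simplexVec, dif_pos hj, ← ho]
    simp only [inner_sub_left, inner_sub_right, real_inner_smul_left, real_inner_smul_right,
      hss, hso, hos, hoo, ha, hp]
    have hkj : ((⟨(k:ℕ), hk⟩ : Fin n) = ⟨(j:ℕ), hj⟩) ↔ (k = j) := by
      simp [Fin.ext_iff]
    rw [if_congr hkj rfl rfl]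
    simp only [← hs1, ← hsn]
    by_cases h : k = j
    · rw [if_pos h, if_pos h]
      field_simp
      linear_combination (-(n:ℝ)) * hsn2 + ((n:ℝ) - 1) * hs12
    · rw [if_neg h, if_neg h]
      field_simp
      linear_combination hsn2 - hs12
  · have h : ¬ k = j := by
      intro e; rw [e] at hk; exact hj hk
    rw [simplexVec, dif_pos hk, simplexVec, dif_neg hj, if_neg h, ← ho]
    simp only [inner_sub_left, inner_neg_left, inner_neg_right, real_inner_smul_left,
      real_inner_smul_right, hso, hoo, ha, hp]
    simp only [← hs1, ← hsn]
    field_simp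
    linear_combination hsn2
  · have h : ¬ k = j := by
      intro e; rw [e] at hk; exact hk hj
    rw [simplexVec, dif_neg hk, simplexVec, dif_pos hj, if_neg h, ← ho]
    simp only [inner_sub_right, inner_neg_left, inner_neg_right, real_inner_smul_left,
      real_inner_smul_right, hos, hoo, ha, hp]
    simp only [← hs1, ← hsn]
    field_simp
    linear_combination hsn2
  · have h : k = j := by
      have : (k:ℕ) = n := by omega
      have : (j:ℕ) = n := by omega
      apply Fin.ext; omega
    rw [simplexVec, dif_neg hk, simplexVec, dif_neg hj, if_pos h, ← ho]
    simp only [inner_neg_left, inner_neg_right, real_inner_smul_left, real_inner_smul_right, hoo]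
    simp only [← hs1, ← hsn]
    field_simp
    linear_combination (-1:ℝ) * hsn2

lemma row_sum (n : ℕ) (hn : 1 ≤ n) (x : Fin (n+1) → ℝ) (i : Fin (n+1)) :
    ∑ j : Fin (n+1), x j * (if j = i then (1:ℝ) else -(1/(n:ℝ)))
      = x i * (1 + 1/n) - (1/n) * ∑ j, x j := by
  have h : ∀ j : Fin (n+1), x j * (if j = i then (1:ℝ) else -(1/(n:ℝ)))
      = (if j = i then x j * (1 + 1/n) else 0) - (1/n) * x j := by
    intro j; split <;> ring
  rw [Finset.sum_congr rfl fun j _ => h j]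
  rw [Finset.sum_sub_distrib, Finset.sum_ite_eq', ← Finset.mul_sum]
  simp

lemma sum_simplexVec (n : ℕ) (hn : 1 ≤ n) : ∑ k : Fin (n+1), simplexVec n k = 0 := by
  have hn0 : (0:ℝ) < n := by exact_mod_cast hn
  have h : ⟪∑ k : Fin (n+1), simplexVec n k, ∑ k : Fin (n+1), simplexVec n k⟫ = 0 := by
    rw [sum_inner]
    have h1 : ∀ k : Fin (n+1), ⟪simplexVec n k, ∑ j : Fin (n+1), simplexVec n j⟫ = 0 := by
      intro k
      rw [inner_sum]
      rw [Finset.sum_congr rfl fun j _ => gram n hn k j]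
      have h2 : ∀ j : Fin (n+1), (if k = j then (1:ℝ) else -(1/(n:ℝ)))
          = (1:ℝ) * (if j = k then (1:ℝ) else -(1/(n:ℝ))) := by
        intro j; simp [eq_comm]
      rw [Finset.sum_congr rfl fun j _ => h2 j, row_sum n hn (fun _ => 1) k]
      field_simp
      simp
    simp [h1]
  exact inner_self_eq_zero.mp h

lemma dep (n : ℕ) (hn : 1 ≤ n) (x : Fin (n+1) → ℝ)
    (h : ∑ j : Fin (n+1), x j • simplexVec n j = 0) (i i' : Fin (n+1)) : x i = x i' := by
  have hn0 : (0:ℝ) < n := by exact_mod_cast hn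
  have key : ∀ i : Fin (n+1), x i * (1 + 1/n) = (1/n) * ∑ j, x j := by
    intro i
    have h0 : ⟪∑ j : Fin (n+1), x j • simplexVec n j, simplexVec n i⟫ = 0 := by
      rw [h, inner_zero_left]
    rw [sum_inner] at h0
    simp only [real_inner_smul_left] at h0
    rw [Finset.sum_congr rfl fun j _ => by rw [gram n hn j i], row_sum n hn x i] at h0
    linarith
  have h1 := key i
  have h2 := key i'
  have hne : (1:ℝ) + 1/n ≠ 0 := by positivity
  have : x i * (1 + 1/n) = x i' * (1 + 1/n) := by rw [h1, h2]
  exact mul_right_cancel₀ hne this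

theorem stmt_4 (n d : ℕ) (hn : 2 ≤ n) (hd : 2 ≤ d)
    (α : Fin n → ℝ) (hα : 0 < ∑ k, |α k|) (μ : ℝ)
    (v : EuclideanSpace ℝ (Fin n))
    (hv : v = ∑ k : Fin n, α k • simplexVec n k.castSucc)
    (heig : ∑ k : Fin (n + 1), ⟪v, simplexVec n k⟫ ^ (d - 1) • simplexVec n k = μ • v)
    (σ : Equiv.Perm (Fin (n + 1)))
    (w : EuclideanSpace ℝ (Fin n))
    (hw : w = ∑ k : Fin n, α k • simplexVec n (σ k.castSucc)) :
    w ≠ 0 ∧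
      ∑ k : Fin (n + 1), ⟪w, simplexVec n k⟫ ^ (d - 1) • simplexVec n k = μ • w := by
  have hn1 : 1 ≤ n := by omega
  set β : Fin (n+1) → ℝ := fun j => if h : (j:ℕ) < n then α ⟨j, h⟩ else 0 with hβ
  have hβc : ∀ k : Fin n, β k.castSucc = α k := by
    intro k
    simp only [hβ, Fin.coe_castSucc, dif_pos k.isLt, Fin.eta]
  have hβl : β (Fin.last n) = 0 := by simp [hβ]
  have hβv : v = ∑ j : Fin (n+1), β j • simplexVec n j := by
    rw [hv, Fin.sum_univ_castSucc, hβl, zero_smul, add_zero]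
    exact Finset.sum_congr rfl fun k _ => by rw [hβc]
  have hβw : w = ∑ j : Fin (n+1), β j • simplexVec n (σ j) := by
    rw [hw, Fin.sum_univ_castSucc, hβl, zero_smul, add_zero]
    exact Finset.sum_congr rfl fun k _ => by rw [hβc]
  constructor
  · intro h0
    rw [hβw] at h0
    have h0' : ∑ j : Fin (n+1), β (σ.symm j) • simplexVec n j = 0 := by
      rw [← Equiv.sum_comp σ (fun j => β (σ.symm j) • simplexVec n j)]
      simpa using h0
    have hc := dep n hn1 (fun j => β (σ.symm j)) h0'
    have hz : ∀ j : Fin (n+1), β j = 0 := by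
      intro j
      have := hc (σ j) (σ (Fin.last n))
      simpa [hβl] using this
    have hz' : ∀ k : Fin n, α k = 0 := fun k => by rw [← hβc k, hz]
    simp [hz'] at hα
  · -- eigen equation
    have hwin : ∀ j : Fin (n+1), ⟪w, simplexVec n (σ j)⟫ = ⟪v, simplexVec n j⟫ := by
      intro j
      rw [hβw, hβv, sum_inner, sum_inner]
      refine Finset.sum_congr rfl fun k _ => ?_
      rw [real_inner_smul_left, real_inner_smul_left, gram n hn1, gram n hn1,
        if_congr (Equiv.apply_eq_iff_eq σ) rfl rfl]
    set c : Fin (n+1) → ℝ := fun j => ⟪v, simplexVec n j⟫ ^ (d-1) - μ * β j with hcdef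
    have h0 : ∑ j : Fin (n+1), c j • simplexVec n j = 0 := by
      simp only [hcdef, sub_smul, Finset.sum_sub_distrib, mul_smul]
      rw [heig, ← Finset.smul_sum, ← hβv, sub_self]
    have hc : ∀ j : Fin (n+1), c j = c 0 := fun j => dep n hn1 c h0 j 0
    rw [← Equiv.sum_comp σ (fun k => ⟪w, simplexVec n k⟫ ^ (d-1) • simplexVec n k)]
    simp only [hwin]
    have hrhs : μ • w = ∑ j : Fin (n+1), (μ * β j) • simplexVec n (σ j) := by
      rw [hβw, Finset.smul_sum]
      exact Finset.sum_congr rfl fun j _ => by rw [smul_smul]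
    rw [hrhs, ← sub_eq_zero, ← Finset.sum_sub_distrib]
    have : ∀ j : Fin (n+1), ⟪v, simplexVec n j⟫ ^ (d-1) • simplexVec n (σ j)
        - (μ * β j) • simplexVec n (σ j) = c 0 • simplexVec n (σ j) := by
      intro j
      rw [← sub_smul, ← hc j, hcdef]
    rw [Finset.sum_congr rfl fun j _ => this j, ← Finset.smul_sum,
      Equiv.sum_comp σ (simplexVec n), sum_simplexVec n hn1, smul_zero]
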